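/- Let θ ∈ [0, 2π) and let m_0^{(θ)}(z) = Σ_{k=0}^3 a_k z^k with the coefficients a_k given by the circle parametrization a_0 = (1−cos θ+sin θ)/(2√2), a_1 = (1−cos θ−sin θ)/(2√2), a_2 = (1+cos θ−sin θ)/(2√2), a_3 = (1+cos θ+sin θ)/(2√2). Then the zero set {z ∈ T : m_0^{(θ)}(−z) = 0} contains a nontrivial cycle for the doubling map z ↦ z² if and only if θ = π/2, in which case m_0^{(θ)}(z) = (1 + z³)/√2 and the cycle is {e^{2πi/3}, e^{4πi/3}}. -/

import Mathlib

open Complex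

/-- `C` is a cycle of length `k` for the doubling map `z ↦ z²` on the unit circle:
`k` distinct points of the circle, permuted cyclically by squaring. -/
def IsCycleOfLength (k : ℕ) (C : Set ℂ) : Prop :=
  0 < k ∧ ∃ z : ZMod k → ℂ, Function.Injective z ∧ (∀ i, ‖z i‖ = 1) ∧
    (∀ i, z (i + 1) = z i ^ 2) ∧ C = Set.range z

/-- If a squaring-cycle ever hits `1`, it is constantly `1`. -/
lemma range_eq_one_of_cycle {k : ℕ} (hk : 0 < k) (z : ZMod k → ℂ)
    (hsq : ∀ i, z (i + 1) = z i ^ 2) (i : ZMod k) (hi : z i = 1) :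
    Set.range z = {1} := by
  haveI : NeZero k := ⟨hk.ne'⟩
  have step : ∀ n : ℕ, z (i + (n : ZMod k)) = 1 := by
    intro n
    induction n with
    | zero => simpa using hi
    | succ m ih =>
      have hcast : ((m + 1 : ℕ) : ZMod k) = (m : ZMod k) + 1 := by push_cast; ring
      rw [hcast, ← add_assoc, hsq, ih, one_pow]
  ext x
  simp only [Set.mem_range, Set.mem_singleton_iff]
  constructor
  · rintro ⟨j, rfl⟩
    have h1 := step (j - i).val
    rwa [ZMod.natCast_zmod_val, show i + (j - i) = j by ring] at h1
  · intro hx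
    exact ⟨i, by rw [hi, hx]⟩

theorem stmt_17 (θ : ℝ) (hθ : θ ∈ Set.Ico 0 (2 * Real.pi))
    (a : Fin 4 → ℝ)
    (ha0 : a 0 = (1 - Real.cos θ + Real.sin θ) / (2 * Real.sqrt 2))
    (ha1 : a 1 = (1 - Real.cos θ - Real.sin θ) / (2 * Real.sqrt 2))
    (ha2 : a 2 = (1 + Real.cos θ - Real.sin θ) / (2 * Real.sqrt 2))
    (ha3 : a 3 = (1 + Real.cos θ + Real.sin θ) / (2 * Real.sqrt 2))
    (m₀ : ℂ → ℂ)
    (hm₀ : ∀ z : ℂ, m₀ z = a 0 + a 1 * z + a 2 * z ^ 2 + a 3 * z ^ 3) :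
    ((∃ (k : ℕ) (C : Set ℂ), IsCycleOfLength k C ∧ C ≠ {1} ∧
        C ⊆ {z : ℂ | ‖z‖ = 1 ∧ m₀ (-z) = 0}) ↔ θ = Real.pi / 2) ∧
    (θ = Real.pi / 2 →
      (∀ z : ℂ, m₀ z = (1 + z ^ 3) / Real.sqrt 2) ∧
      ∀ (k : ℕ) (C : Set ℂ), IsCycleOfLength k C → C ≠ {1} →
        C ⊆ {z : ℂ | ‖z‖ = 1 ∧ m₀ (-z) = 0} →
        C = {exp (2 * Real.pi * I / 3), exp (4 * Real.pi * I / 3)}) := by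
  have hπ := Real.pi_pos
  have hs2 : (0:ℝ) < Real.sqrt 2 := Real.sqrt_pos.mpr (by norm_num)
  have hs2' : Real.sqrt 2 ≠ 0 := hs2.ne'
  have hd : (2 * Real.sqrt 2 : ℝ) ≠ 0 := by positivity
  obtain ⟨hθ0, hθ2π⟩ := hθ
  -- the factorization m₀(-w) = (1-w)·q(w)
  have hrel : a 1 = a 0 + a 2 - a 3 := by rw [ha0, ha1, ha2, ha3]; ring
  have hfac : ∀ w : ℂ, m₀ (-w)
      = (1 - w) * ((a 3 : ℂ) * w ^ 2 + ((a 3 : ℂ) - (a 2 : ℂ)) * w + (a 0 : ℂ)) := by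
    intro w
    rw [hm₀, hrel]
    push_cast
    ring
  -- the cube roots of unity
  set ω : ℂ := Complex.exp ((2 * Real.pi / 3 : ℝ) * I) with hωdef
  have hω2 : ω ^ 2 = Complex.exp ((4 * Real.pi / 3 : ℝ) * I) := by
    rw [hωdef, sq, ← Complex.exp_add]
    congr 1
    push_cast
    ring
  have hω3 : ω ^ 3 = 1 := by
    rw [pow_succ, hω2, hωdef, ← Complex.exp_add,
      show ((4 * Real.pi / 3 : ℝ) : ℂ) * I + ((2 * Real.pi / 3 : ℝ) : ℂ) * I
        = 2 * Real.pi * I by push_cast; ring, Complex.exp_two_pi_mul_I]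
  have hωim : ω.im = Real.sin (2 * Real.pi / 3) := by
    rw [hωdef]; exact Complex.exp_ofReal_mul_I_im _
  have hω2im : (ω ^ 2).im = Real.sin (4 * Real.pi / 3) := by
    rw [hω2]; exact Complex.exp_ofReal_mul_I_im _
  have him1 : 0 < Real.sin (2 * Real.pi / 3) :=
    Real.sin_pos_of_pos_of_lt_pi (by positivity) (by linarith)
  have him2 : Real.sin (4 * Real.pi / 3) < 0 := by
    have h := Real.sin_add_pi (Real.pi / 3)
    have h3 : 0 < Real.sin (Real.pi / 3) :=
      Real.sin_pos_of_pos_of_lt_pi (by positivity) (by linarith)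
    rw [show (4 * Real.pi / 3 : ℝ) = Real.pi / 3 + Real.pi by ring, h]
    linarith
  have hωne1 : ω ≠ 1 := by
    intro h
    have : ω.im = 0 := by rw [h]; simp
    rw [hωim] at this; linarith
  have hω2ne1 : ω ^ 2 ≠ 1 := by
    intro h
    have : (ω ^ 2).im = 0 := by rw [h]; simp
    rw [hω2im] at this; linarith
  have hωneω2 : ω ≠ ω ^ 2 := by
    intro h
    have h' := congrArg Complex.im h
    rw [hωim, hω2im] at h'; linarith
  have hnω : ‖ω‖ = 1 := by
    rw [hωdef]; exact Complex.norm_exp_ofReal_mul_I _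
  have hcube : ∀ u : ℂ, u ^ 3 = 1 → u ≠ 1 → u = ω ∨ u = ω ^ 2 := by
    intro u hu hu1
    have e : u ^ 2 + u + 1 = 0 := by
      have hne := sub_ne_zero.mpr hu1
      have h : (u - 1) * (u ^ 2 + u + 1) = 0 := by linear_combination hu
      rcases mul_eq_zero.mp h with h' | h'
      · exact absurd h' hne
      · exact h'
    have eω : ω ^ 2 + ω + 1 = 0 := by
      have hne := sub_ne_zero.mpr hωne1
      have h : (ω - 1) * (ω ^ 2 + ω + 1) = 0 := by linear_combination hω3
      rcases mul_eq_zero.mp h with h' | h'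
      · exact absurd h' hne
      · exact h'
    have h : (u - ω) * (u - ω ^ 2) = 0 := by linear_combination e - u * eω + hω3
    rcases mul_eq_zero.mp h with h' | h'
    · exact Or.inl (sub_eq_zero.mp h')
    · exact Or.inr (sub_eq_zero.mp h')
  -- the m₀ formula at θ = π/2
  have hm : θ = Real.pi / 2 → ∀ w : ℂ, m₀ w = (1 + w ^ 3) / Real.sqrt 2 := by
    intro ht w
    have hc : Real.cos θ = 0 := by rw [ht]; exact Real.cos_pi_div_two
    have hs : Real.sin θ = 1 := by rw [ht]; exact Real.sin_pi_div_two
    have ca0 : a 0 = 1 / Real.sqrt 2 := by rw [ha0, hc, hs]; field_simp; norm_num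
    have ca1 : a 1 = 0 := by rw [ha1, hc, hs]; norm_num
    have ca2 : a 2 = 0 := by rw [ha2, hc, hs]; norm_num
    have ca3 : a 3 = 1 / Real.sqrt 2 := by rw [ha3, hc, hs]; field_simp; norm_num
    have h2 : (Real.sqrt 2 : ℂ) ≠ 0 := by exact_mod_cast hs2'
    rw [hm₀, ca0, ca1, ca2, ca3]
    push_cast
    field_simp
    ring
  constructor
  · constructor
    · rintro ⟨k, C, ⟨hk, z, hinj, hnorm, hsq, hC⟩, hne, hsub⟩
      haveI : NeZero k := ⟨hk.ne'⟩
      have hone : ∀ i, z i ≠ 1 := by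
        intro i hi
        exact hne (hC.trans (range_eq_one_of_cycle hk z hsq i hi))
      have hz0 : ∀ i, z i ≠ 0 := by
        intro i h
        have hn := hnorm i
        rw [h] at hn
        simp at hn
      have hzero : ∀ i, (a 3:ℂ) * (z i) ^ 2 + ((a 3:ℂ) - (a 2:ℂ)) * z i + (a 0:ℂ) = 0 := by
        intro i
        have hmem : z i ∈ C := hC ▸ Set.mem_range_self i
        have h := (hsub hmem).2
        rw [hfac] at h
        rcases mul_eq_zero.mp h with h' | h'
        · exact absurd (sub_eq_zero.mp h').symm (hone i)
        · exact h'
      have e1 := hsq 0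
      have e2 := hsq (0 + 1)
      have hne01 : z 0 ≠ z (0 + 1) := by
        intro h
        have h2 : z 0 * z 0 = z 0 * 1 := by rw [mul_one, ← sq, ← e1, ← h]
        exact hone 0 (mul_left_cancel₀ (hz0 0) h2)
      have hne12 : z (0 + 1) ≠ z (0 + 1 + 1) := by
        intro h
        have h2 : z (0+1) * z (0+1) = z (0+1) * 1 := by rw [mul_one, ← sq, ← e2, ← h]
        exact hone (0+1) (mul_left_cancel₀ (hz0 (0+1)) h2)
      by_cases hcs : z 0 = z (0 + 1 + 1)
      · -- period-2 case: cube roots of unity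
        have hcube0 : z 0 ^ 3 = 1 := by
          have h4 : z 0 * z 0 ^ 3 = z 0 * 1 := by
            rw [mul_one]
            calc z 0 * z 0 ^ 3 = (z 0 ^ 2) ^ 2 := by ring
              _ = z (0 + 1 + 1) := by rw [e2, e1]
              _ = z 0 := hcs.symm
          exact mul_left_cancel₀ (hz0 0) h4
        have hcube1 : z (0 + 1) ^ 3 = 1 := by
          have h : z (0 + 1) ^ 3 = (z 0 ^ 3) ^ 2 := by rw [e1]; ring
          rw [h, hcube0, one_pow]
        have eq0 : z 0 ^ 2 + z 0 + 1 = 0 := by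
          have hne := sub_ne_zero.mpr (hone 0)
          have h : (z 0 - 1) * (z 0 ^ 2 + z 0 + 1) = 0 := by linear_combination hcube0
          rcases mul_eq_zero.mp h with h' | h'
          · exact absurd h' hne
          · exact h'
        have eq1 : z (0+1) ^ 2 + z (0+1) + 1 = 0 := by
          have hne := sub_ne_zero.mpr (hone (0+1))
          have h : (z (0+1) - 1) * (z (0+1) ^ 2 + z (0+1) + 1) = 0 := by
            linear_combination hcube1
          rcases mul_eq_zero.mp h with h' | h'
          · exact absurd h' hne
          · exact h'
        have key : (a 2 : ℂ) * (z 0 - z (0+1)) = 0 := by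
          linear_combination -(hzero 0) + hzero (0+1) + (a 3:ℂ) * eq0 - (a 3:ℂ) * eq1
        have ha2C : (a 2 : ℂ) = 0 := by
          rcases mul_eq_zero.mp key with h' | h'
          · exact h'
          · exact absurd h' (sub_ne_zero.mpr hne01)
        have key2 : (a 0 : ℂ) - (a 3 : ℂ) = 0 := by
          linear_combination hzero 0 - (a 3:ℂ) * eq0 + z 0 * ha2C
        have ha2R : a 2 = 0 := by exact_mod_cast ha2C
        have ha03 : a 0 = a 3 := by exact_mod_cast sub_eq_zero.mp key2
        have n2 : 1 + Real.cos θ - Real.sin θ = 0 := by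
          rw [ha2] at ha2R
          rcases div_eq_zero_iff.mp ha2R with h | h
          · exact h
          · exact absurd h hd
        have hcos : Real.cos θ = 0 := by
          rw [ha0, ha3] at ha03
          field_simp at ha03
          linarith
        have hsin : Real.sin θ = 1 := by linarith
        rcases Real.sin_eq_one_iff.mp hsin with ⟨n, hn⟩
        have hn0 : n = 0 := by
          rcases lt_trichotomy n 0 with h | h | h
          · have h1 : n ≤ -1 := by omega
            have h1' : (n:ℝ) ≤ -1 := by exact_mod_cast h1
            nlinarith
          · exact h
          · have h1 : (1:ℤ) ≤ n := h
            have h1' : (1:ℝ) ≤ (n:ℝ) := by exact_mod_cast h1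
            nlinarith
        rw [hn0] at hn
        push_cast at hn
        linarith
      · -- three distinct roots of the quadratic: contradiction
        exfalso
        have key3 : (a 3:ℂ) *
            ((z 0 - z (0+1)) * (z 0 - z (0+1+1)) * (z (0+1) - z (0+1+1))) = 0 := by
          linear_combination (z (0+1) - z (0+1+1)) * hzero 0
            - (z 0 - z (0+1+1)) * hzero (0+1) + (z 0 - z (0+1)) * hzero (0+1+1)
        have ha3C : (a 3 : ℂ) = 0 := by
          rcases mul_eq_zero.mp key3 with h' | h'
          · exact h'
          · rcases mul_eq_zero.mp h' with h'' | h''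
            · rcases mul_eq_zero.mp h'' with h3 | h3
              · exact absurd h3 (sub_ne_zero.mpr hne01)
              · exact absurd h3 (sub_ne_zero.mpr hcs)
            · exact absurd h'' (sub_ne_zero.mpr hne12)
        have key4 : ((a 3:ℂ) - (a 2:ℂ)) * (z 0 - z (0+1)) = 0 := by
          linear_combination hzero 0 - hzero (0+1) - (z 0 ^ 2 - z (0+1) ^ 2) * ha3C
        have hbC : (a 3 : ℂ) - (a 2 : ℂ) = 0 := by
          rcases mul_eq_zero.mp key4 with h' | h'
          · exact h'
          · exact absurd h' (sub_ne_zero.mpr hne01)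
        have ha0C : (a 0 : ℂ) = 0 := by
          linear_combination hzero 0 - z 0 ^ 2 * ha3C - z 0 * hbC
        have ha3R : a 3 = 0 := by exact_mod_cast ha3C
        have ha0R : a 0 = 0 := by exact_mod_cast ha0C
        have ha2R : a 2 = 0 := by
          have : (a 2 : ℂ) = 0 := by linear_combination ha3C - hbC
          exact_mod_cast this
        have n0 : 1 - Real.cos θ + Real.sin θ = 0 := by
          rw [ha0] at ha0R
          rcases div_eq_zero_iff.mp ha0R with h | h
          · exact h
          · exact absurd h hd
        have n3 : 1 + Real.cos θ + Real.sin θ = 0 := by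
          rw [ha3] at ha3R
          rcases div_eq_zero_iff.mp ha3R with h | h
          · exact h
          · exact absurd h hd
        have n2 : 1 + Real.cos θ - Real.sin θ = 0 := by
          rw [ha2] at ha2R
          rcases div_eq_zero_iff.mp ha2R with h | h
          · exact h
          · exact absurd h hd
        linarith
    · -- existence of the cycle when θ = π/2
      intro ht
      have hmf := hm ht
      have h10 : (1 : ZMod 2) ≠ 0 := by decide
      have hi2 : ∀ i : ZMod 2, i = 0 ∨ i = 1 := by decide
      set zf : ZMod 2 → ℂ := fun i => if i = 0 then ω else ω ^ 2 with hzf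
      have hzf0 : zf 0 = ω := if_pos rfl
      have hzf1 : zf 1 = ω ^ 2 := if_neg h10
      have hω4 : (ω ^ 2) ^ 2 = ω := by
        rw [show (ω ^ 2) ^ 2 = ω ^ 3 * ω by ring, hω3, one_mul]
      refine ⟨2, {ω, ω ^ 2}, ⟨by norm_num, zf, ?_, ?_, ?_, ?_⟩, ?_, ?_⟩
      · intro i j hij
        rcases hi2 i with hi | hi <;> rcases hi2 j with hj | hj <;> subst hi <;> subst hj
        · rfl
        · rw [hzf0, hzf1] at hij; exact absurd hij hωneω2
        · rw [hzf0, hzf1] at hij; exact absurd hij.symm hωneω2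
        · rfl
      · intro i
        rcases hi2 i with hi | hi <;> subst hi
        · rw [hzf0, hnω]
        · rw [hzf1, norm_pow, hnω, one_pow]
      · intro i
        rcases hi2 i with hi | hi <;> subst hi
        · rw [show (0:ZMod 2) + 1 = 1 by decide, hzf1, hzf0]
        · rw [show (1:ZMod 2) + 1 = 0 by decide, hzf0, hzf1, hω4]
      · ext x
        simp only [Set.mem_range, Set.mem_insert_iff, Set.mem_singleton_iff]
        constructor
        · rintro (rfl | rfl)
          · exact ⟨0, hzf0⟩
          · exact ⟨1, hzf1⟩
        · rintro ⟨i, rfl⟩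
          rcases hi2 i with hi | hi <;> subst hi
          · exact Or.inl hzf0.symm
          · exact Or.inr hzf1.symm
      · intro h
        have hmem : ω ∈ ({ω, ω ^ 2} : Set ℂ) := Set.mem_insert _ _
        rw [h] at hmem
        exact hωne1 hmem
      · intro x hx
        have hx3 : x ^ 3 = 1 ∧ ‖x‖ = 1 := by
          rcases hx with rfl | hx'
          · exact ⟨hω3, hnω⟩
          · rw [Set.mem_singleton_iff] at hx'
            subst hx'
            constructor
            · rw [show (ω ^ 2) ^ 3 = (ω ^ 3) ^ 2 by ring, hω3, one_pow]
            · rw [norm_pow, hnω, one_pow]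
        refine ⟨hx3.2, ?_⟩
        rw [hmf, show (-x) ^ 3 = -(x ^ 3) by ring, hx3.1]
        norm_num
  · -- uniqueness part
    intro ht
    refine ⟨hm ht, ?_⟩
    rintro k C ⟨hk, z, hinj, hnorm, hsq, hC⟩ hne hsub
    haveI : NeZero k := ⟨hk.ne'⟩
    have hmf := hm ht
    have h2 : (Real.sqrt 2 : ℂ) ≠ 0 := by exact_mod_cast hs2'
    have hone : ∀ i, z i ≠ 1 := by
      intro i hi
      exact hne (hC.trans (range_eq_one_of_cycle hk z hsq i hi))
    have hcub : ∀ i, z i ^ 3 = 1 := by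
      intro i
      have hmem : z i ∈ C := hC ▸ Set.mem_range_self i
      have h := (hsub hmem).2
      rw [hmf, div_eq_zero_iff] at h
      rcases h with h | h
      · linear_combination -h
      · exact absurd h h2
    have hcase : ∀ i, z i = ω ∨ z i = ω ^ 2 := fun i => hcube _ (hcub i) (hone i)
    have hω' : Complex.exp (2 * Real.pi * I / 3) = ω := by
      rw [hωdef]; congr 1; push_cast; ring
    have hω2' : Complex.exp (4 * Real.pi * I / 3) = ω ^ 2 := by
      rw [hω2]; congr 1; push_cast; ring
    rw [hω', hω2', hC]
    apply Set.Subset.antisymm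
    · rintro x ⟨i, rfl⟩
      rcases hcase i with h | h
      · exact Or.inl h
      · exact Or.inr h
    · have hω4 : (ω ^ 2) ^ 2 = ω := by
        rw [show (ω ^ 2) ^ 2 = ω ^ 3 * ω by ring, hω3, one_mul]
      have hmemω : ω ∈ Set.range z ∧ ω ^ 2 ∈ Set.range z := by
        rcases hcase 0 with h | h
        · exact ⟨⟨0, h⟩, ⟨0 + 1, by rw [hsq 0, h]⟩⟩
        · exact ⟨⟨0 + 1, by rw [hsq 0, h, hω4]⟩, ⟨0, h⟩⟩
      rintro x (rfl | rfl)
      · exact hmemω.1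
      · exact hmemω.2
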